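/- arXiv:2102.01718 — 2 statements merged into one kernel-verified Lean document; each statement's English description precedes it below -/
import Mathlib

section
/- Let D = D_b × [0,∞) ⊂ ℝ^d with D_b ⊂ ℝ^{d-1} bounded measurable of positive measure |D_b|, and let B = B((x̂, y'), R) be a ball of radius R with x̂ ∈ D_b at distance > R·(√3/2 margin) from ∂D_b and y' ≥ R. Define Q(γ, y') = ∫_{D∖B} γ e^{-γ y} dx dy. Then for all γ > 0 and y' ≥ R: (1/8)(1 − e^{-1/2}) |D_b| ≤ Q(γ, y') ≤ |D_b|. -/
open MeasureTheory Real Set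

lemma g_intOn (γ : ℝ) (hγ : 0 < γ) (a : ℝ) :
    IntegrableOn (fun y : ℝ => γ * exp (-γ * y)) (Ioi a) := by
  exact (exp_neg_integrableOn_Ioi a hγ).const_mul γ

lemma g_int_Ioi (γ : ℝ) (hγ : 0 < γ) (a : ℝ) :
    ∫ y in Ioi a, γ * exp (-γ * y) = exp (-γ * a) := by
  have hderiv : ∀ x ∈ Ici a, HasDerivAt (fun y : ℝ => -exp (-γ * y)) (γ * exp (-γ * x)) x := by
    intro x _
    have h : HasDerivAt (fun y : ℝ => -γ * y) (-γ) x := by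
      simpa using (hasDerivAt_id x).const_mul (-γ)
    have : HasDerivAt (fun y : ℝ => -exp (-γ * y)) (-(exp (-γ * x) * -γ)) x := (h.exp).neg
    convert this using 1
    ring
  have htend : Filter.Tendsto (fun y : ℝ => -exp (-γ * y)) Filter.atTop (nhds 0) := by
    rw [show (0:ℝ) = -0 by ring]
    refine (Real.tendsto_exp_atBot.comp ?_).neg
    exact Filter.tendsto_id.const_mul_atTop_of_neg (by linarith)
  have := integral_Ioi_of_hasDerivAt_of_tendsto' hderiv (g_intOn γ hγ a) htend
  simpa using this

lemma g_int_Ioo (γ : ℝ) (hγ : 0 < γ) (t : ℝ) (ht : 0 ≤ t) :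
    ∫ y in Ioo 0 t, γ * exp (-γ * y) = 1 - exp (-γ * t) := by
  rw [← integral_Ioc_eq_integral_Ioo, ← intervalIntegral.integral_of_le ht]
  have hderiv : ∀ x ∈ uIcc (0:ℝ) t, HasDerivAt (fun y : ℝ => -exp (-γ * y)) (γ * exp (-γ * x)) x := by
    intro x _
    have h : HasDerivAt (fun y : ℝ => -γ * y) (-γ) x := by
      simpa using (hasDerivAt_id x).const_mul (-γ)
    have : HasDerivAt (fun y : ℝ => -exp (-γ * y)) (-(exp (-γ * x) * -γ)) x := (h.exp).neg
    convert this using 1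
    ring
  have hint : IntervalIntegrable (fun y : ℝ => γ * exp (-γ * y)) volume 0 t :=
    (by fun_prop : Continuous fun y : ℝ => γ * exp (-γ * y)).intervalIntegrable 0 t
  rw [intervalIntegral.integral_eq_sub_of_hasDerivAt hderiv hint]
  simp
  ring

lemma prod_setIntegral (m : ℕ) (s : Set (EuclideanSpace ℝ (Fin m))) (t : Set ℝ) (γ : ℝ) :
    ∫ p in s ×ˢ t, γ * exp (-γ * p.2) =
      (volume s).toReal * ∫ y in t, γ * exp (-γ * y) := by
  rw [show (volume : Measure (EuclideanSpace ℝ (Fin m) × ℝ)) = volume.prod volume from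
    Measure.volume_eq_prod _ _]
  have := MeasureTheory.setIntegral_prod_mul (μ := (volume : Measure (EuclideanSpace ℝ (Fin m))))
    (ν := (volume : Measure ℝ)) (fun _ => (1:ℝ)) (fun y => γ * exp (-γ * y)) s t
  rw [← measureReal_def]
  simpa using this

lemma prod_integrableOn (m : ℕ) (s : Set (EuclideanSpace ℝ (Fin m))) (hs : volume s < ⊤)
    (γ : ℝ) (hγ : 0 < γ) (a : ℝ) :
    IntegrableOn (fun p : EuclideanSpace ℝ (Fin m) × ℝ => γ * exp (-γ * p.2))
      (s ×ˢ Ioi a) := by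
  rw [IntegrableOn, show (volume : Measure (EuclideanSpace ℝ (Fin m) × ℝ)) = volume.prod volume from
    Measure.volume_eq_prod _ _, ← Measure.prod_restrict]
  have h1 : Integrable (fun _ : EuclideanSpace ℝ (Fin m) => (1:ℝ)) (volume.restrict s) :=
    integrableOn_const hs.ne
  have := h1.mul_prod (g_intOn γ hγ a)
  simpa using this

/-- The region `D ∖ B((x̂,y'),R)` where `D = D_b × (0,∞)`: points `(x,y)` with
`x ∈ D_b`, `y > 0`, lying outside the `d`-dimensional ball of radius `R`
centered at `(x̂, y')`. -/
def gasRegion {E : Type*} [NormedAddCommGroup E]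
    (Db : Set E) (xh : E) (R y' : ℝ) : Set (E × ℝ) :=
  {p | p.1 ∈ Db ∧ 0 < p.2 ∧ R ^ 2 < ‖p.1 - xh‖ ^ 2 + (p.2 - y') ^ 2}

/-- The mass `Q(γ,y') = ∫_{D∖B} γ e^{-γ y} dx dy`. -/
noncomputable def gasMass (d : ℕ) (Db : Set (EuclideanSpace ℝ (Fin (d - 1))))
    (xh : EuclideanSpace ℝ (Fin (d - 1))) (R y' γ : ℝ) : ℝ :=
  ∫ p in gasRegion Db xh R y', γ * exp (-γ * p.2)

/-- `(1/8)(1 − e^{-1/2})|D_b| ≤ Q(γ,y') ≤ |D_b|`. -/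
theorem archimedes_mass_bounds (d : ℕ) (hd : 2 ≤ d)
    (Db : Set (EuclideanSpace ℝ (Fin (d - 1)))) (hDb : MeasurableSet Db)
    (hDbb : Bornology.IsBounded Db) (hDbpos : 0 < volume Db)
    (R : ℝ) (hR : 0 < R) (xh : EuclideanSpace ℝ (Fin (d - 1)))
    (hball : Metric.ball xh R ⊆ Db)
    (γ y' : ℝ) (hγ : 0 < γ) (hy' : R ≤ y') :
    1 / 8 * (1 - exp (-(1 / 2))) * (volume Db).toReal ≤ gasMass d Db xh R y' γ
      ∧ gasMass d Db xh R y' γ ≤ (volume Db).toReal := by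

  set f : EuclideanSpace ℝ (Fin (d - 1)) × ℝ → ℝ := fun p => γ * exp (-γ * p.2) with hf
  set Vb : ℝ := (volume Db).toReal with hVb
  have hVfin : volume Db ≠ ⊤ := (hDbb.measure_lt_top (μ := volume)).ne
  have hVb0 : 0 ≤ Vb := ENNReal.toReal_nonneg
  have hfpos : ∀ p : EuclideanSpace ℝ (Fin (d - 1)) × ℝ, 0 ≤ f p := fun p => by positivity
  -- integrability on the big slab
  have hInt : IntegrableOn f (Db ×ˢ Ioi (0:ℝ)) :=
    prod_integrableOn _ Db hDbb.measure_lt_top γ hγ 0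
  have hfae : 0 ≤ᵐ[(volume : Measure (EuclideanSpace ℝ (Fin (d - 1)) × ℝ)).restrict (Db ×ˢ Ioi (0:ℝ))] f :=
    Filter.Eventually.of_forall hfpos
  have hsub : gasRegion Db xh R y' ⊆ Db ×ˢ Ioi (0:ℝ) := by
    intro p hp; exact ⟨hp.1, hp.2.1⟩
  have hIntR : IntegrableOn f (gasRegion Db xh R y') := hInt.mono_set hsub
  have hfaeR : 0 ≤ᵐ[(volume : Measure (EuclideanSpace ℝ (Fin (d - 1)) × ℝ)).restrict (gasRegion Db xh R y')] f :=
    Filter.Eventually.of_forall hfpos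
  -- upper bound
  have hupper : gasMass d Db xh R y' γ ≤ Vb := by
    have h1 : gasMass d Db xh R y' γ ≤ ∫ p in Db ×ˢ Ioi (0:ℝ), f p :=
      setIntegral_mono_set hInt hfae (HasSubset.Subset.eventuallyLE hsub)
    have h2 : ∫ p in Db ×ˢ Ioi (0:ℝ), f p = Vb * exp (-γ * 0) := by
      rw [prod_setIntegral, g_int_Ioi γ hγ]
    simpa using h1.trans_eq (by simpa using h2)
  -- lower bound 1 : slab above the ball
  have hlow1 : Vb * exp (-γ * (y' + R)) ≤ gasMass d Db xh R y' γ := by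
    have hsub1 : Db ×ˢ Ioi (y' + R) ⊆ gasRegion Db xh R y' := by
      rintro ⟨x, y⟩ ⟨hx, hy⟩
      have hy : y' + R < y := hy
      refine ⟨hx, by simp only; nlinarith, ?_⟩
      simp only
      nlinarith [norm_nonneg (x - xh), sq_nonneg (‖x - xh‖)]
    have h1 : ∫ p in Db ×ˢ Ioi (y' + R), f p ≤ gasMass d Db xh R y' γ :=
      setIntegral_mono_set hIntR hfaeR (HasSubset.Subset.eventuallyLE hsub1)
    have h2 : ∫ p in Db ×ˢ Ioi (y' + R), f p = Vb * exp (-γ * (y' + R)) := by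
      rw [prod_setIntegral, g_int_Ioi γ hγ]
    linarith [h2 ▸ h1]
  -- numeric facts
  have hsqrt3 : Real.sqrt 3 ≤ 7 / 4 := by
    rw [show (7:ℝ)/4 = Real.sqrt ((7/4)^2) from (Real.sqrt_sq (by norm_num)).symm]
    exact Real.sqrt_le_sqrt (by norm_num)
  have hsqrt0 : 0 ≤ Real.sqrt 3 := Real.sqrt_nonneg 3
  have hsq3 : (Real.sqrt 3) ^ 2 = 3 := Real.sq_sqrt (by norm_num)
  -- lower bound 2 : cylinder complement below the ball
  set sB : Set (EuclideanSpace ℝ (Fin (d - 1))) := Metric.ball xh (Real.sqrt 3 / 2 * R) with hsB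
  set c2 : ℝ := (volume (Db \ sB)).toReal with hc2def
  have hlow2 : c2 * (1 - exp (-γ * (y' - R / 2))) ≤ gasMass d Db xh R y' γ := by
    have hsub2 : (Db \ sB) ×ˢ Ioo 0 (y' - R / 2) ⊆ gasRegion Db xh R y' := by
      rintro ⟨x, y⟩ ⟨⟨hx, hxb⟩, hy1, hy2⟩
      refine ⟨hx, hy1, ?_⟩
      have hdist : Real.sqrt 3 / 2 * R ≤ dist x xh := le_of_not_gt (fun h => hxb h)
      rw [dist_eq_norm] at hdist
      simp only
      nlinarith [hsq3, mul_self_le_mul_self (by positivity : (0:ℝ) ≤ Real.sqrt 3 / 2 * R) hdist,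
        mul_pos (show (0:ℝ) < y' - y - R/2 by simp only at hy2; linarith)
          (show (0:ℝ) < y' - y + R/2 by simp only at hy1 hy2; linarith)]
    have h1 : ∫ p in (Db \ sB) ×ˢ Ioo 0 (y' - R / 2), f p ≤ gasMass d Db xh R y' γ :=
      setIntegral_mono_set hIntR hfaeR (HasSubset.Subset.eventuallyLE hsub2)
    have h2 : ∫ p in (Db \ sB) ×ˢ Ioo 0 (y' - R / 2), f p
        = c2 * (1 - exp (-γ * (y' - R / 2))) := by
      rw [prod_setIntegral, g_int_Ioo γ hγ _ (by linarith)]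
    linarith [h2 ▸ h1]
  -- measure of the complement of the cylinder
  have hc2 : (1 - Real.sqrt 3 / 2) * Vb ≤ c2 := by
    have hrpos : (0:ℝ) < Real.sqrt 3 / 2 := by
      have : (0:ℝ) < Real.sqrt 3 := Real.sqrt_pos.2 (by norm_num)
      linarith
    have hb1 : volume sB = ENNReal.ofReal ((Real.sqrt 3 / 2) ^ (Module.finrank ℝ (EuclideanSpace ℝ (Fin (d - 1)))))
        * volume (Metric.ball (0:EuclideanSpace ℝ (Fin (d - 1))) R) :=
      Measure.addHaar_ball_mul_of_pos volume xh hrpos R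
    have hb2 : volume (Metric.ball (0:EuclideanSpace ℝ (Fin (d - 1))) R) = volume (Metric.ball xh R) :=
      (Measure.addHaar_ball_center volume xh R).symm
    have hn : Module.finrank ℝ (EuclideanSpace ℝ (Fin (d - 1))) = d - 1 := finrank_euclideanSpace_fin
    have hpow : ((Real.sqrt 3 / 2) ^ (Module.finrank ℝ (EuclideanSpace ℝ (Fin (d - 1)))) : ℝ) ≤ Real.sqrt 3 / 2 := by
      refine pow_le_of_le_one (by positivity) (by linarith) ?_
      rw [hn]; omega
    have hsmall : volume sB ≤ ENNReal.ofReal (Real.sqrt 3 / 2) * volume Db := by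
      rw [hb1, hb2]
      exact mul_le_mul' (ENNReal.ofReal_le_ofReal hpow) (measure_mono hball)
    have hsfin : volume sB ≠ ⊤ := Metric.isBounded_ball.measure_lt_top.ne
    have hdfin : volume (Db \ sB) ≠ ⊤ :=
      ((measure_mono diff_subset).trans_lt hDbb.measure_lt_top).ne
    have hsplit : volume Db ≤ volume (Db \ sB) + volume sB :=
      (measure_mono (subset_diff_union Db sB)).trans (measure_union_le _ _)
    have hr1 : Vb ≤ c2 + (volume sB).toReal := by
      have := ENNReal.toReal_mono (by finiteness) hsplit
      rwa [ENNReal.toReal_add hdfin hsfin] at this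
    have hr2 : (volume sB).toReal ≤ Real.sqrt 3 / 2 * Vb := by
      have := ENNReal.toReal_mono (by finiteness) hsmall
      rwa [ENNReal.toReal_mul, ENNReal.toReal_ofReal (by positivity)] at this
    linarith
  -- exp facts
  have hE0 : 0 ≤ 1 - exp (-(1/2)) := by
    have : exp (-(1/2:ℝ)) ≤ 1 := Real.exp_le_one_iff.2 (by norm_num)
    linarith
  have hE1 : 1 - exp (-(1/2:ℝ)) ≤ 1 := by linarith [Real.exp_pos (-(1/2:ℝ))]
  have he2 : (1:ℝ)/8 ≤ exp (-2) := by
    have h2 : exp (2:ℝ) ≤ 8 := by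
      rw [show (2:ℝ) = 1 + 1 by norm_num, Real.exp_add]
      nlinarith [Real.exp_one_lt_d9, Real.exp_pos 1]
    rw [Real.exp_neg]
    have := inv_anti₀ (Real.exp_pos 2) h2
    linarith
  -- combine
  refine ⟨?_, hupper⟩
  by_cases hcase : (1:ℝ)/2 ≤ γ * (y' - R/2)
  · have hB : 1 - exp (-(1/2)) ≤ 1 - exp (-γ * (y' - R/2)) := by
      have : exp (-γ * (y' - R/2)) ≤ exp (-(1/2)) := Real.exp_le_exp.2 (by linarith)
      linarith
    have h8 : (1:ℝ)/8 ≤ 1 - Real.sqrt 3 / 2 := by linarith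
    have s1 : 1/8 * Vb ≤ (1 - Real.sqrt 3 / 2) * Vb := mul_le_mul_of_nonneg_right h8 hVb0
    have s2 := mul_le_mul (s1.trans hc2) hB hE0 ENNReal.toReal_nonneg
    have hring : 1/8 * (1 - exp (-(1/2))) * Vb = 1/8 * Vb * (1 - exp (-(1/2))) := by ring
    linarith only [s2, hlow2, hring]
  · push_neg at hcase
    have hmul : γ * (R/2) ≤ γ * (y' - R/2) :=
      mul_le_mul_of_nonneg_left (by linarith) hγ.le
    have hRγ : γ * R < 1 := by linarith
    have h2 : γ * (y' + R) < 2 := by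
      have : γ * (y' + R) = γ * (y' - R/2) + 3/2 * (γ * R) := by ring
      linarith
    have hA : (1:ℝ)/8 ≤ exp (-γ * (y' + R)) := by
      have : exp (-2:ℝ) ≤ exp (-γ * (y' + R)) := Real.exp_le_exp.2 (by linarith)
      linarith
    have s1 : 1/8 * (1 - exp (-(1/2))) * Vb ≤ 1/8 * Vb := by
      linarith [mul_le_mul_of_nonneg_right hE1 hVb0]
    have s2 : 1/8 * Vb ≤ Vb * exp (-γ * (y' + R)) := by
      linarith [mul_le_mul_of_nonneg_left hA hVb0]
    linarith only [s1, s2, hlow1]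
end

section
/- Let α: (0, z) → (0, ∞) be C¹ with α'(u) = α(u)β(u), where β is continuous, strictly positive on (0, u₀), strictly negative on (u₀, z), and satisfies |β(u)| ≥ (d/(2z²))|u − u₀| for all u. Then for k ≥ 1, ∫_0^z α(u)^k (z−u)^{d-1} du ≤ (2 + 4/d) z^d α(u₀)^k / √k, provided z k^{-1/2} ≤ min(u₀, z − u₀). -/
open MeasureTheory Set

set_option maxHeartbeats 1000000

/-- Laplace-type upper bound: if `α' = αβ` with `β` positive before `u₀`,
negative after, and `|β(u)| ≥ (d/(2z²))|u−u₀|`, then for `k ≥ 1` with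
`z/√k ≤ min(u₀, z−u₀)`,
`∫₀^z α^k (z−u)^{d-1} du ≤ (2 + 4/d) z^d α(u₀)^k / √k`. -/
theorem archimedes_laplace_upper (d k : ℕ) (hd : 1 ≤ d) (hk : 1 ≤ k)
    (z u₀ : ℝ) (hz : 0 < z) (hu₀ : u₀ ∈ Ioo 0 z) (α β : ℝ → ℝ)
    (hαpos : ∀ u ∈ Ioo 0 z, 0 < α u)
    (hαβ : ∀ u ∈ Ioo 0 z, HasDerivAt α (α u * β u) u)
    (hβcont : ContinuousOn β (Ioo 0 z))
    (hβlb : ∀ u ∈ Ioo 0 z, (d : ℝ) / (2 * z ^ 2) * |u - u₀| ≤ |β u|)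
    (hβpos : ∀ u ∈ Ioo 0 u₀, 0 < β u)
    (hβneg : ∀ u ∈ Ioo u₀ z, β u < 0)
    (hkz : z / Real.sqrt k ≤ min u₀ (z - u₀)) :
    (∫ u in Ioo 0 z, α u ^ k * (z - u) ^ (d - 1))
      ≤ (2 + 4 / d) * z ^ d * α u₀ ^ k / Real.sqrt k := by
  obtain ⟨hu₀0, hu₀z⟩ := hu₀
  have hd0 : (0:ℝ) < d := by exact_mod_cast hd
  set sk := Real.sqrt k with hskdef
  have hsk1 : (1:ℝ) ≤ sk := Real.one_le_sqrt.2 (by exact_mod_cast hk)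
  have hsk0 : (0:ℝ) < sk := lt_of_lt_of_le one_pos hsk1
  have hkr : (k:ℝ) = sk * sk := (Real.mul_self_sqrt (by positivity)).symm
  set ε := z / sk with hεdef
  have hε0 : 0 < ε := div_pos hz hsk0
  have hεu : ε ≤ u₀ := hkz.trans (min_le_left _ _)
  have hεz : ε ≤ z - u₀ := hkz.trans (min_le_right _ _)
  set a := u₀ - ε with hadef
  set b := u₀ + ε with hbdef
  have ha0 : 0 ≤ a := by simp [hadef]; linarith
  have hbz : b ≤ z := by simp [hbdef]; linarith
  have hau : a < u₀ := by simp [hadef]; linarith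
  have hub : u₀ < b := by simp [hbdef]; linarith
  have haz : a < z := hau.trans hu₀z
  have hb0 : 0 < b := hu₀0.trans hub
  have hab : a < b := hau.trans hub
  have hαc : ContinuousOn α (Ioo 0 z) := fun u hu => ((hαβ u hu).continuousAt).continuousWithinAt
  -- α is maximized at u₀
  have hmax : ∀ u ∈ Ioo 0 z, α u ≤ α u₀ := by
    intro u hu
    rcases lt_trichotomy u u₀ with h | h | h
    · have hsub : Icc u u₀ ⊆ Ioo 0 z := Icc_subset_Ioo hu.1 hu₀z
      have hmono := strictMonoOn_of_deriv_pos (convex_Icc u u₀) (hαc.mono hsub) ?_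
      · exact (hmono (left_mem_Icc.2 h.le) (right_mem_Icc.2 h.le) h).le
      · intro x hx
        rw [interior_Icc] at hx
        have hx' : x ∈ Ioo 0 z := hsub (Ioo_subset_Icc_self hx)
        rw [(hαβ x hx').deriv]
        exact mul_pos (hαpos x hx') (hβpos x ⟨hx'.1, hx.2⟩)
    · rw [h]
    · have hsub : Icc u₀ u ⊆ Ioo 0 z := Icc_subset_Ioo hu₀0 hu.2
      have hanti := strictAntiOn_of_deriv_neg (convex_Icc u₀ u) (hαc.mono hsub) ?_
      · exact (hanti (left_mem_Icc.2 h.le) (right_mem_Icc.2 h.le) h).le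
      · intro x hx
        rw [interior_Icc] at hx
        have hx' : x ∈ Ioo 0 z := hsub (Ioo_subset_Icc_self hx)
        rw [(hαβ x hx').deriv]
        exact mul_neg_of_pos_of_neg (hαpos x hx') (hβneg x ⟨hx.1, hx'.2⟩)
  set F : ℝ → ℝ := fun u => α u ^ k * (z - u) ^ (d - 1) with hFdef
  set A := α u₀ ^ k with hAdef
  have hA0 : 0 < A := pow_pos (hαpos u₀ ⟨hu₀0, hu₀z⟩) k
  set K := A * z ^ (d - 1) with hKdef
  have hK0 : 0 < K := mul_pos hA0 (pow_pos hz _)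
  have hF0 : ∀ u ∈ Ioo 0 z, 0 ≤ F u := fun u hu =>
    mul_nonneg (pow_nonneg (hαpos u hu).le _) (pow_nonneg (by linarith [hu.2]) _)
  have hFK : ∀ u ∈ Ioo 0 z, F u ≤ K := by
    intro u hu
    exact mul_le_mul (pow_le_pow_left₀ (hαpos u hu).le (hmax u hu) k)
      (pow_le_pow_left₀ (by linarith [hu.2]) (by linarith [hu.1]) _)
      (pow_nonneg (by linarith [hu.2]) _) hA0.le
  have hFc : ContinuousOn F (Ioo 0 z) :=
    (hαc.pow k).mul (((continuous_const.sub continuous_id).pow _).continuousOn)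
  have hFint : IntegrableOn F (Ioo 0 z) := by
    refine ⟨hFc.aestronglyMeasurable measurableSet_Ioo,
      HasFiniteIntegral.restrict_of_bounded (C := K) measure_Ioo_lt_top ?_⟩
    refine (ae_restrict_iff' measurableSet_Ioo).2 (ae_of_all _ fun x hx => ?_)
    rw [Real.norm_eq_abs, abs_of_nonneg (hF0 x hx)]
    exact hFK x hx
  -- bound on a const piece: for 0 ≤ s ≤ t ≤ z, ∫_{Ioc s t} F ≤ (t-s)*K
  have hconstbd : ∀ s t : ℝ, 0 ≤ s → s ≤ t → t ≤ z → (∫ u in Ioc s t, F u) ≤ (t - s) * K := by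
    intro s t hs hst htz
    rw [integral_Ioc_eq_integral_Ioo]
    have hsub : Ioo s t ⊆ Ioo 0 z := Ioo_subset_Ioo hs htz
    calc (∫ u in Ioo s t, F u) ≤ ∫ _u in Ioo s t, K := by
          refine setIntegral_mono_on (hFint.mono_set hsub)
            (integrableOn_const measure_Ioo_lt_top.ne) measurableSet_Ioo
            (fun x hx => hFK x (hsub hx))
      _ = (t - s) * K := by
          rw [setIntegral_const, measureReal_def, Real.volume_Ioo, smul_eq_mul, ENNReal.toReal_ofReal (by linarith)]
  -- derivative of α^k
  have hG' : ∀ u ∈ Ioo 0 z, HasDerivAt (fun x => α x ^ k) ((k:ℝ) * (α u ^ k * β u)) u := by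
    intro u hu
    have h := (hαβ u hu).pow k
    have hpow : α u ^ (k-1) * α u = α u ^ k := by rw [← pow_succ, Nat.sub_add_cancel hk]
    refine h.congr_deriv ?_
    rw [← hpow]; ring
  -- FTC
  have hFTC : ∀ s t : ℝ, 0 < s → s ≤ t → t < z →
      (∫ u in s..t, (k:ℝ) * (α u ^ k * β u)) = α t ^ k - α s ^ k := by
    intro s t hs hst htz
    have hsub : uIcc s t ⊆ Ioo 0 z := by
      rw [uIcc_of_le hst]
      exact fun x hx => ⟨lt_of_lt_of_le hs hx.1, lt_of_le_of_lt hx.2 htz⟩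
    exact intervalIntegral.integral_eq_sub_of_hasDerivAt (fun x hx => hG' x (hsub hx))
      ((continuousOn_const.mul ((hαc.pow k).mul hβcont)).mono hsub).intervalIntegrable
  set C2 := 2 * z ^ d / ((d:ℝ) * sk) with hC2def
  have hC20 : 0 < C2 := by positivity
  have hzd : z ^ d = z ^ (d-1) * z := by rw [← pow_succ, Nat.sub_add_cancel hd]
  have hC2k : C2 * k = 2 * z ^ d * sk / d := by
    rw [hC2def, hkr]; field_simp
  -- pointwise bound versions
  have hFbd : ∀ u ∈ Ioo 0 z, (d:ℝ) / (2 * z * sk) ≤ |β u| → β u ≠ 0 →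
      F u ≤ C2 * ((k:ℝ) * (α u ^ k * |β u|)) := by
    intro u hu hβb _
    have h1 : F u ≤ α u ^ k * z ^ (d-1) :=
      mul_le_mul_of_nonneg_left (pow_le_pow_left₀ (by linarith [hu.2]) (by linarith [hu.1]) _)
        (pow_nonneg (hαpos u hu).le _)
    have h2 : z ^ (d-1) ≤ 2 * z ^ d * sk / d * |β u| := by
      have h3 : z ^ (d-1) = 2 * z ^ d * sk / d * ((d:ℝ) / (2 * z * sk)) := by
        rw [hzd]; field_simp
      rw [h3]
      exact mul_le_mul_of_nonneg_left hβb (by positivity)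
    calc F u ≤ α u ^ k * z ^ (d-1) := h1
      _ ≤ α u ^ k * (2 * z ^ d * sk / d * |β u|) :=
          mul_le_mul_of_nonneg_left h2 (pow_nonneg (hαpos u hu).le _)
      _ = C2 * ((k:ℝ) * (α u ^ k * |β u|)) := by rw [← hC2k]; ring
  -- the |β| lower bound on the outer regions
  have hβout : ∀ u ∈ Ioo 0 z, ε ≤ |u - u₀| → (d:ℝ) / (2 * z * sk) ≤ |β u| := by
    intro u hu h
    have h1 := hβlb u hu
    have h2 : (d:ℝ) / (2 * z * sk) = (d:ℝ) / (2 * z ^ 2) * ε := by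
      rw [hεdef]; field_simp
    rw [h2]
    exact le_trans (mul_le_mul_of_nonneg_left h (by positivity)) h1
    -- left outer piece
  have hleft : (∫ u in Ioc 0 a, F u) ≤ C2 * A := by
    rcases eq_or_lt_of_le ha0 with h0a | h0a
    · rw [← h0a]; simp; positivity
    · have key : ∀ t ∈ Ioo (0:ℝ) a, (∫ u in Ioc 0 a, F u) ≤ t * K + C2 * A := by
        intro t ht
        have hsub1 : Ioc (0:ℝ) t ⊆ Ioo 0 z := fun x hx =>
          ⟨hx.1, lt_of_le_of_lt hx.2 (ht.2.trans haz)⟩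
        have hsub2 : Ioc t a ⊆ Ioo 0 z := fun x hx =>
          ⟨ht.1.trans hx.1, lt_of_le_of_lt hx.2 haz⟩
        have hsplit : (∫ u in Ioc 0 a, F u) = (∫ u in Ioc 0 t, F u) + (∫ u in Ioc t a, F u) := by
          rw [← Ioc_union_Ioc_eq_Ioc ht.1.le ht.2.le]
          exact setIntegral_union (Ioc_disjoint_Ioc_of_le le_rfl) measurableSet_Ioc
            (hFint.mono_set hsub1) (hFint.mono_set hsub2)
        have h1 : (∫ u in Ioc 0 t, F u) ≤ t * K := by
          have := hconstbd 0 t le_rfl ht.1.le (ht.2.trans haz).le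
          simpa using this
        have hIcc : Icc t a ⊆ Ioo 0 z := fun x hx =>
          ⟨lt_of_lt_of_le ht.1 hx.1, lt_of_le_of_lt hx.2 haz⟩
        have hpt : ∀ u ∈ Icc t a, F u ≤ C2 * ((k:ℝ) * (α u ^ k * β u)) := by
          intro u hu
          have hu' : u ∈ Ioo 0 z := hIcc hu
          have hβu : 0 < β u := hβpos u ⟨hu'.1, lt_of_le_of_lt hu.2 hau⟩
          have habs : ε ≤ |u - u₀| := by
            rw [abs_of_nonpos (by linarith [hu.2, hau])]
            have : u ≤ u₀ - ε := hu.2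
            linarith
          have := hFbd u hu' (hβout u hu' habs) hβu.ne'
          rwa [abs_of_pos hβu] at this
        have huIcc : uIcc t a ⊆ Ioo 0 z := by rw [uIcc_of_le ht.2.le]; exact hIcc
        have h2 : (∫ u in Ioc t a, F u) ≤ C2 * A := by
          rw [← intervalIntegral.integral_of_le ht.2.le]
          have hFi : IntervalIntegrable F volume t a :=
            (hFc.mono huIcc).intervalIntegrable
          have hgi : IntervalIntegrable (fun u => C2 * ((k:ℝ) * (α u ^ k * β u))) volume t a :=
            ((continuousOn_const.mul (continuousOn_const.mul
              ((hαc.pow k).mul hβcont))).mono huIcc).intervalIntegrable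
          calc (∫ u in t..a, F u) ≤ ∫ u in t..a, C2 * ((k:ℝ) * (α u ^ k * β u)) :=
                intervalIntegral.integral_mono_on ht.2.le hFi hgi hpt
            _ = C2 * (α a ^ k - α t ^ k) := by
                rw [intervalIntegral.integral_const_mul, hFTC t a ht.1 ht.2.le haz]
            _ ≤ C2 * A := by
                refine mul_le_mul_of_nonneg_left ?_ hC20.le
                have h3 : α a ^ k ≤ A :=
                  pow_le_pow_left₀ (hαpos a ⟨h0a, haz⟩).le (hmax a ⟨h0a, haz⟩) k
                have h4 : 0 ≤ α t ^ k := pow_nonneg (hαpos t (hIcc ⟨le_rfl, ht.2.le⟩)).le k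
                linarith
        linarith
      refine le_of_forall_sub_le fun δ hδ => ?_
      have ht : min (a/2) (δ / K) ∈ Ioo (0:ℝ) a :=
        ⟨lt_min (by linarith) (div_pos hδ hK0), (min_le_left _ _).trans_lt (by linarith)⟩
      have h1 := key _ ht
      have h2 : min (a/2) (δ / K) * K ≤ δ := by
        calc min (a/2) (δ / K) * K ≤ (δ / K) * K :=
              mul_le_mul_of_nonneg_right (min_le_right _ _) hK0.le
          _ = δ := div_mul_cancel₀ _ hK0.ne'
      linarith
  -- right outer piece
  have hright : (∫ u in Ioc b z, F u) ≤ C2 * A := by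
    rcases eq_or_lt_of_le hbz with hbz' | hbz'
    · rw [hbz']; simp; positivity
    · have key : ∀ t ∈ Ioo b z, (∫ u in Ioc b z, F u) ≤ C2 * A + (z - t) * K := by
        intro t ht
        have hsub1 : Ioc b t ⊆ Ioo 0 z := fun x hx =>
          ⟨hb0.trans hx.1, lt_of_le_of_lt hx.2 ht.2⟩
        have hsub2' : Ioo t z ⊆ Ioo 0 z := fun x hx => ⟨(hb0.trans ht.1).trans hx.1, hx.2⟩
        have hsplit : (∫ u in Ioc b z, F u) = (∫ u in Ioc b t, F u) + (∫ u in Ioc t z, F u) := by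
          rw [← Ioc_union_Ioc_eq_Ioc ht.1.le ht.2.le]
          refine setIntegral_union (Ioc_disjoint_Ioc_of_le le_rfl) measurableSet_Ioc
            (hFint.mono_set hsub1) ?_
          exact (integrableOn_Ioc_iff_integrableOn_Ioo (hb := enorm_ne_top)).2 (hFint.mono_set hsub2')
        have h1 : (∫ u in Ioc t z, F u) ≤ (z - t) * K :=
          hconstbd t z (hb0.trans ht.1).le ht.2.le le_rfl
        have hIcc : Icc b t ⊆ Ioo 0 z := fun x hx =>
          ⟨hb0.trans_le hx.1, lt_of_le_of_lt hx.2 ht.2⟩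
        have hpt : ∀ u ∈ Icc b t, F u ≤ (-C2) * ((k:ℝ) * (α u ^ k * β u)) := by
          intro u hu
          have hu' : u ∈ Ioo 0 z := hIcc hu
          have hβu : β u < 0 := hβneg u ⟨lt_of_lt_of_le hub hu.1, hu'.2⟩
          have habs : ε ≤ |u - u₀| := by
            rw [abs_of_nonneg (by linarith [hu.1, hub])]
            have : u₀ + ε ≤ u := hu.1
            linarith
          have h5 := hFbd u hu' (hβout u hu' habs) hβu.ne
          rw [abs_of_neg hβu] at h5
          calc F u ≤ C2 * ((k:ℝ) * (α u ^ k * -β u)) := h5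
            _ = (-C2) * ((k:ℝ) * (α u ^ k * β u)) := by ring
        have huIcc : uIcc b t ⊆ Ioo 0 z := by rw [uIcc_of_le ht.1.le]; exact hIcc
        have h2 : (∫ u in Ioc b t, F u) ≤ C2 * A := by
          rw [← intervalIntegral.integral_of_le ht.1.le]
          have hFi : IntervalIntegrable F volume b t :=
            (hFc.mono huIcc).intervalIntegrable
          have hgi : IntervalIntegrable (fun u => (-C2) * ((k:ℝ) * (α u ^ k * β u))) volume b t :=
            ((continuousOn_const.mul (continuousOn_const.mul
              ((hαc.pow k).mul hβcont))).mono huIcc).intervalIntegrable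
          calc (∫ u in b..t, F u) ≤ ∫ u in b..t, (-C2) * ((k:ℝ) * (α u ^ k * β u)) :=
                intervalIntegral.integral_mono_on ht.1.le hFi hgi hpt
            _ = (-C2) * (α t ^ k - α b ^ k) := by
                rw [intervalIntegral.integral_const_mul, hFTC b t hb0 ht.1.le ht.2]
            _ ≤ C2 * A := by
                have h3 : α b ^ k ≤ A :=
                  pow_le_pow_left₀ (hαpos b ⟨hb0, hbz'⟩).le (hmax b ⟨hb0, hbz'⟩) k
                have h4 : 0 ≤ α t ^ k := pow_nonneg (hαpos t (hIcc ⟨ht.1.le, le_rfl⟩)).le k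
                nlinarith
        linarith
      refine le_of_forall_sub_le fun δ hδ => ?_
      have hm1 : min ((z - b)/2) (δ / K) ≤ (z - b)/2 := min_le_left _ _
      have hm0 : 0 < min ((z - b)/2) (δ / K) := lt_min (by linarith) (div_pos hδ hK0)
      have ht : z - min ((z - b)/2) (δ / K) ∈ Ioo b z := ⟨by linarith, by linarith⟩
      have h1 := key _ ht
      have h2 : (z - (z - min ((z - b)/2) (δ / K))) * K ≤ δ := by
        have h3 : z - (z - min ((z - b)/2) (δ / K)) = min ((z - b)/2) (δ / K) := by ring
        rw [h3]
        calc min ((z - b)/2) (δ / K) * K ≤ (δ / K) * K :=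
              mul_le_mul_of_nonneg_right (min_le_right _ _) hK0.le
          _ = δ := div_mul_cancel₀ _ hK0.ne'
      linarith
  -- middle piece
  have hmid : (∫ u in Ioc a b, F u) ≤ 2 * ε * K := by
    calc (∫ u in Ioc a b, F u) ≤ (b - a) * K := hconstbd a b ha0 hab.le hbz
      _ = 2 * ε * K := by rw [hadef, hbdef]; ring
  -- splitting
  have hint1 : IntegrableOn F (Ioc 0 a) :=
    hFint.mono_set (fun x hx => ⟨hx.1, lt_of_le_of_lt hx.2 haz⟩)
  have hint2 : IntegrableOn F (Ioc a b) :=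
    (integrableOn_Ioc_iff_integrableOn_Ioo (hb := enorm_ne_top)).2 (hFint.mono_set (Ioo_subset_Ioo ha0 hbz))
  have hint3 : IntegrableOn F (Ioc b z) :=
    (integrableOn_Ioc_iff_integrableOn_Ioo (hb := enorm_ne_top)).2 (hFint.mono_set (Ioo_subset_Ioo hb0.le le_rfl))
  have hsplitall : (∫ u in Ioo 0 z, F u)
      = (∫ u in Ioc 0 a, F u) + (∫ u in Ioc a b, F u) + (∫ u in Ioc b z, F u) := by
    rw [← integral_Ioc_eq_integral_Ioo]
    have e1 : Ioc (0:ℝ) z = (Ioc 0 a ∪ Ioc a b) ∪ Ioc b z := by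
      rw [Ioc_union_Ioc_eq_Ioc ha0 hab.le, Ioc_union_Ioc_eq_Ioc hb0.le hbz]
    have hdisj : Disjoint (Ioc (0:ℝ) a ∪ Ioc a b) (Ioc b z) := by
      rw [Ioc_union_Ioc_eq_Ioc ha0 hab.le]; exact (Ioc_disjoint_Ioc_of_le le_rfl)
    rw [e1, setIntegral_union hdisj measurableSet_Ioc (hint1.union hint2) hint3,
      setIntegral_union (Ioc_disjoint_Ioc_of_le le_rfl) measurableSet_Ioc hint1 hint2]
  have hfinal : C2 * A + 2 * ε * K + C2 * A = (2 + 4 / d) * z ^ d * A / sk := by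
    rw [hC2def, hεdef, hKdef, hzd]; field_simp; ring
  rw [hsplitall, ← hfinal]
  linarith
end
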